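/- Let N ≥ 2, ω = exp(2πi/N), and let k, k' ∈ ℂ with k² + k'² = 1. Suppose (t, λ) ∈ ℂ² with λ ≠ 0 satisfies k²·t^N = (1 − k'λ)(1 − k'λ⁻¹). Then the pairs (ωt, λ) and (t, λ⁻¹) satisfy the same equation, and if in addition t ≠ 0, λ ≠ k' and k'λ ≠ 1, then the pair (t', λ') := (t⁻¹, (1 − k'λ)/(k' − λ)) satisfies λ' ≠ 0 and k²·t'^N = (1 − k'λ')(1 − k'λ'⁻¹). (These are the generators θ, σ, ι of the ℤ/2 × D_N symmetry of the hyperelliptic curve of the τ⁽²⁾-model.) -/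

import Mathlib

/-- `(t,λ)` lies on the hyperelliptic curve `W_{k',k}`:
`λ ≠ 0` and `k²·t^N = (1 − k'λ)(1 − k'λ⁻¹)`. -/
def OnHyp (N : ℕ) (k' k t l : ℂ) : Prop :=
  l ≠ 0 ∧ k ^ 2 * t ^ N = (1 - k' * l) * (1 - k' * l⁻¹)

/-- The generators `θ, σ, ι` of the `ℤ/2 × D_N` symmetry of the hyperelliptic curve of
the `τ⁽²⁾`-model: with `ω = exp(2πi/N)`, if `(t,λ) ∈ W_{k',k}` then `(ωt, λ)` and
`(t, λ⁻¹)` lie on `W_{k',k}`, and if in addition `t ≠ 0`, `λ ≠ k'` and `k'λ ≠ 1`, then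
`(t⁻¹, (1 − k'λ)/(k' − λ))` lies on `W_{k',k}`. -/
theorem hyperelliptic_symmetries (N : ℕ) (hN : 2 ≤ N)
    (ω : ℂ) (hω : ω = Complex.exp (2 * Real.pi * Complex.I / N))
    (k k' : ℂ) (hkk : k ^ 2 + k' ^ 2 = 1)
    (t l : ℂ) (h : OnHyp N k' k t l) :
    OnHyp N k' k (ω * t) l ∧
    OnHyp N k' k t l⁻¹ ∧
    (t ≠ 0 → l ≠ k' → k' * l ≠ 1 →
      OnHyp N k' k t⁻¹ ((1 - k' * l) / (k' - l))) := by
  obtain ⟨hl, heq⟩ := h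
  have hNne : (N : ℂ) ≠ 0 := by
    have : 0 < N := lt_of_lt_of_le (by norm_num) hN
    exact_mod_cast this.ne'
  have hωN : ω ^ N = 1 := by
    rw [hω, ← Complex.exp_nat_mul, mul_div_cancel₀ _ hNne, Complex.exp_two_pi_mul_I]
  refine ⟨⟨hl, ?_⟩, ⟨inv_ne_zero hl, ?_⟩, ?_⟩
  · rw [mul_pow, hωN, one_mul, heq]
  · rw [inv_inv, heq]; ring
  · intro ht hlk hkl
    have h1 : (1 : ℂ) - k' * l ≠ 0 := by
      intro h0; apply hkl; linear_combination -h0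
    have h2 : k' - l ≠ 0 := sub_ne_zero.mpr (Ne.symm hlk)
    refine ⟨div_ne_zero h1 h2, ?_⟩
    have hti : t ^ N ≠ 0 := pow_ne_zero _ ht
    have heq' : l * (k ^ 2 * t ^ N) = (1 - k' * l) * (l - k') := by
      rw [heq]; field_simp
    have e1 : 1 - k' * ((1 - k' * l) / (k' - l)) = -l * k ^ 2 / (k' - l) := by
      field_simp
      linear_combination l * hkk
    have e2 : 1 - k' * ((1 - k' * l) / (k' - l))⁻¹ = k ^ 2 / (1 - k' * l) := by
      rw [inv_div]
      field_simp
      linear_combination -hkk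
    rw [e1, e2, inv_pow]
    field_simp
    have h1' : (1 : ℂ) - l * k' ≠ 0 := by rwa [mul_comm l k']
    field_simp
    linear_combination (k ^ 2) * heq'
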